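/- arXiv:2004.05227 — 2 statements merged into one kernel-verified Lean document; each statement's English description precedes it below -/
import Mathlib

section
/- Let Λ ⊆ ℕ* with L_Λ(z) = ∑_{m∈Λ} m^{-z} convergent for Re(z) > α > 0, σ > 0, and t ∈ ℝ. Then with F(s) = ∏_{m∈Λ}(1-e^{-sm})^{-1}, for any finite subset S ⊆ Λ one has |F(σ + it)|/F(σ) ≤ ∏_{m∈S} (1 + 4 sin²(mt/2)/(e^{mσ}(1 - e^{-mσ})²))^{-1/2}; in particular |F(σ+it)| ≤ F(σ). -/
theorem generating_function_ratio_bound (Λ : Set ℕ) (hΛ : ∀ m ∈ Λ, 0 < m)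
    (α : ℝ) (hα : 0 < α) (hL : Summable fun m : Λ => ((m : ℕ) : ℝ) ^ (-α))
    (σ : ℝ) (hσ : 0 < σ) (t : ℝ)
    (F : ℂ → ℂ) (hF : ∀ s : ℂ, F s = ∏' m : Λ, (1 - Complex.exp (-s * (m : ℕ)))⁻¹)
    (Fr : ℝ → ℝ) (hFr : ∀ x : ℝ, Fr x = ∏' m : Λ, (1 - Real.exp (-x * (m : ℕ)))⁻¹) :
    (∀ S : Finset ℕ, (S : Set ℕ) ⊆ Λ →
      ‖F (σ + t * Complex.I)‖ / Fr σ ≤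
        ∏ m ∈ S, (1 + 4 * Real.sin ((m : ℝ) * t / 2) ^ 2 /
            (Real.exp ((m : ℝ) * σ) * (1 - Real.exp (-(m : ℝ) * σ)) ^ 2)) ^ (-(1 : ℝ) / 2)) ∧
    ‖F (σ + t * Complex.I)‖ ≤ Fr σ := by
  classical
  set s : ℂ := (σ : ℂ) + t * Complex.I with hs
  set z : ℕ → ℝ := fun m => Real.exp (-σ * m) with hzdef
  set r : ℕ → ℝ := fun m => 1 - z m with hrdef
  set c : ℕ → ℂ := fun m => 1 - Complex.exp (-s * m) with hcdef
  set q : ℕ → ℝ := fun m => 4 * Real.sin ((m : ℝ) * t / 2) ^ 2 /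
      (Real.exp ((m : ℝ) * σ) * (1 - Real.exp (-(m : ℝ) * σ)) ^ 2) with hqdef
  set B : ℕ → ℝ := fun m => (1 + q m) ^ (-(1 : ℝ) / 2) with hBdef
  set E : ℝ := Real.exp (-σ) with hEdef
  have hE0 : 0 < E := Real.exp_pos _
  have hE1 : E < 1 := Real.exp_lt_one_iff.mpr (by linarith)
  -- basic facts for every m in Λ
  have hm1 : ∀ m : Λ, 1 ≤ ((m : ℕ) : ℝ) := fun m => by
    exact_mod_cast hΛ m m.2
  have hzpos : ∀ m : ℕ, 0 < z m := fun m => Real.exp_pos _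
  have hzE : ∀ m : Λ, z m ≤ E := by
    intro m
    apply Real.exp_le_exp.mpr
    nlinarith [hm1 m]
  have hz1 : ∀ m : Λ, z m < 1 := fun m => lt_of_le_of_lt (hzE m) hE1
  have hr_pos : ∀ m : Λ, 0 < r (m : ℕ) := fun m => by
    have := hz1 m; simp only [hrdef]; linarith
  -- real/imaginary parts of the exponent
  have hsm_re : ∀ m : ℕ, (-s * m).re = -σ * m := by
    intro m; simp [hs, Complex.add_re, Complex.mul_re]
  have hsm_im : ∀ m : ℕ, (-s * m).im = -(t * m) := by
    intro m; simp [hs, Complex.add_im, Complex.mul_im]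
  have habs_exp : ∀ m : ℕ, ‖Complex.exp (-s * m)‖ = z m := by
    intro m; rw [Complex.norm_exp, hsm_re]
  -- real part of c is positive
  have hcre : ∀ m : Λ, 0 < (c (m : ℕ)).re := by
    intro m
    have h1 : (c (m : ℕ)).re = 1 - z m * Real.cos (-(t * m)) := by
      simp only [hcdef, hzdef, Complex.sub_re, Complex.one_re, Complex.exp_re, hsm_re, hsm_im]
    rw [h1]
    have hc1 : Real.cos (-(t * (m : ℕ))) ≤ 1 := Real.cos_le_one _
    have hc2 : -1 ≤ Real.cos (-(t * (m : ℕ))) := Real.neg_one_le_cos _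
    nlinarith [hz1 m, hzpos (m : ℕ)]
  have hc0 : ∀ m : Λ, c (m : ℕ) ≠ 0 := by
    intro m h
    have := hcre m
    rw [h] at this
    simp at this
  have hcarg : ∀ m : Λ, (c (m : ℕ)).arg ≠ Real.pi := by
    intro m h
    have := (Complex.arg_eq_pi_iff.mp h).1
    linarith [hcre m]
  -- key pointwise identity
  have hq_nonneg : ∀ m : Λ, 0 ≤ q (m : ℕ) := by
    intro m
    apply div_nonneg (by positivity)
    have h1 : (1 : ℝ) - Real.exp (-(m : ℝ) * σ) = r (m : ℕ) := by
      simp only [hrdef, hzdef]; ring_nf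
    rw [h1]
    positivity
  have habs_c : ∀ m : Λ, ‖c (m : ℕ)‖ = r (m : ℕ) * Real.sqrt (1 + q (m : ℕ)) := by
    intro m
    have hrm := hr_pos m
    have hqm := hq_nonneg m
    have h1q : (0 : ℝ) ≤ 1 + q (m : ℕ) := by linarith
    rw [← pow_left_inj₀ (norm_nonneg _) (by positivity) two_ne_zero]
    rw [Complex.sq_norm, Complex.normSq_apply]
    have hre : (c (m : ℕ)).re = 1 - z m * Real.cos (-(t * m)) := by
      simp only [hcdef, hzdef, Complex.sub_re, Complex.one_re, Complex.exp_re, hsm_re, hsm_im]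
    have him : (c (m : ℕ)).im = -(z m * Real.sin (-(t * m))) := by
      simp only [hcdef, hzdef, Complex.sub_im, Complex.one_im, Complex.exp_im, hsm_re, hsm_im]
      ring
    rw [hre, him]
    have hsqrt : Real.sqrt (1 + q (m : ℕ)) ^ 2 = 1 + q (m : ℕ) := Real.sq_sqrt h1q
    have hcos : Real.cos (-(t * (m : ℕ))) = 1 - 2 * Real.sin ((m : ℝ) * t / 2) ^ 2 := by
      rw [Real.cos_neg]
      have h := Real.cos_sq ((t * (m : ℕ)) / 2)
      have h2 := Real.sin_sq_add_cos_sq ((t * (m : ℕ)) / 2)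
      rw [show 2 * (t * (m : ℕ) / 2) = t * (m : ℕ) by ring] at h
      have : Real.sin ((m : ℝ) * t / 2) ^ 2 = Real.sin ((t * (m : ℕ)) / 2) ^ 2 := by
        rw [mul_comm (m : ℝ) t]
      rw [this]
      nlinarith
    have hsin : Real.sin (-(t * (m : ℕ))) ^ 2 = 1 - Real.cos (-(t * (m : ℕ))) ^ 2 := Real.sin_sq _
    have hqeq : r (m : ℕ) ^ 2 * q (m : ℕ) = 4 * z m * Real.sin ((m : ℝ) * t / 2) ^ 2 := by
      have h1 : (1 : ℝ) - Real.exp (-(m : ℝ) * σ) = r (m : ℕ) := by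
        simp only [hrdef, hzdef]; ring_nf
      have h2 : Real.exp ((m : ℝ) * σ) * z m = 1 := by
        rw [hzdef, ← Real.exp_add]; ring_nf; exact Real.exp_zero
      simp only [hqdef, h1]
      have hr2 : r (m : ℕ) ^ 2 ≠ 0 := by positivity
      have hexp : Real.exp ((m : ℝ) * σ) ≠ 0 := Real.exp_ne_zero _
      rw [mul_div_assoc', div_eq_iff (mul_ne_zero hexp hr2)]
      linear_combination (-(4 * Real.sin (((m : ℕ) : ℝ) * t / 2) ^ 2 * r (m : ℕ) ^ 2)) * h2
    have hexpand : (r (m : ℕ) * Real.sqrt (1 + q (m : ℕ))) ^ 2 =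
        r (m : ℕ) ^ 2 + r (m : ℕ) ^ 2 * q (m : ℕ) := by
      rw [mul_pow, hsqrt]; ring
    rw [hexpand, hqeq]
    have hreq : r (m : ℕ) = 1 - z (m : ℕ) := by rw [hrdef]
    rw [hreq]
    linear_combination (z (m : ℕ) ^ 2) * hsin - (2 * z (m : ℕ)) * hcos
  have hBr : ∀ m : Λ, (‖c (m : ℕ)‖)⁻¹ = B (m : ℕ) * (r (m : ℕ))⁻¹ := by
    intro m
    rw [habs_c m, mul_inv, mul_comm]
    congr 1
    rw [Real.sqrt_eq_rpow]
    simp only [hBdef]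
    rw [show (-(1 : ℝ) / 2) = -(1/2 : ℝ) by norm_num]
    rw [Real.rpow_neg (by linarith [hq_nonneg m])]
  have hB_pos : ∀ m : ℕ, 0 < B m := by
    intro m
    apply Real.rpow_pos_of_pos
    have : 0 ≤ q m := by
      apply div_nonneg (by positivity)
      positivity
    linarith
  have hB_le_one : ∀ m : ℕ, B m ≤ 1 := by
    intro m
    apply Real.rpow_le_one_of_one_le_of_nonpos _ (by norm_num)
    have : 0 ≤ q m := by
      apply div_nonneg (by positivity)
      positivity
    linarith
  -- summability of z over Λ
  have hzsum : Summable fun m : Λ => z (m : ℕ) := by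
    have hgeo : Summable fun n : ℕ => z n := by
      have : (fun n : ℕ => z n) = fun n : ℕ => E ^ n := by
        funext n
        rw [hzdef, hEdef, ← Real.exp_nat_mul]
        ring_nf
      rw [this]
      exact summable_geometric_of_lt_one (le_of_lt hE0) hE1
    exact hgeo.subtype Λ
  -- summability of complex logs
  have hlogc : Summable fun m : Λ => Complex.log (c (m : ℕ)) := by
    apply Summable.of_norm_bounded (g := fun m : Λ => (E * (1 - E)⁻¹ / 2 + 1) * z (m : ℕ))
      (hzsum.mul_left _)
    intro m
    have hzm := hzpos (m : ℕ)
    have hzE' := hzE m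
    have hz1' := hz1 m
    have hnorm : ‖-Complex.exp (-s * (m : ℕ))‖ = z (m : ℕ) := by
      rw [norm_neg, habs_exp]
    have hlt : ‖-Complex.exp (-s * (m : ℕ))‖ < 1 := by rw [hnorm]; exact hz1'
    have h := Complex.norm_log_one_add_le hlt
    have hceq : c (m : ℕ) = 1 + -Complex.exp (-s * (m : ℕ)) := by
      rw [hcdef]; ring
    rw [hceq]
    refine h.trans ?_
    rw [hnorm]
    have hinv : (1 - z (m : ℕ))⁻¹ ≤ (1 - E)⁻¹ := by
      apply inv_anti₀ (by linarith) (by linarith)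
    have h1 : z (m : ℕ) ^ 2 * (1 - z (m : ℕ))⁻¹ / 2 ≤ z (m : ℕ) * (E * (1 - E)⁻¹ / 2) := by
      have : z (m : ℕ) ^ 2 * (1 - z (m : ℕ))⁻¹ ≤ z (m : ℕ) * E * (1 - E)⁻¹ := by
        have h2 : z (m : ℕ) ^ 2 ≤ z (m : ℕ) * E := by nlinarith
        have h3 : (0:ℝ) ≤ (1 - z (m:ℕ))⁻¹ := inv_nonneg.mpr (by linarith)
        have h4 : (0:ℝ) ≤ (1 - E)⁻¹ := inv_nonneg.mpr (by linarith)
        calc z (m : ℕ) ^ 2 * (1 - z (m : ℕ))⁻¹ ≤ z (m : ℕ) * E * (1 - z (m : ℕ))⁻¹ := by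
              nlinarith
          _ ≤ z (m : ℕ) * E * (1 - E)⁻¹ := by nlinarith
      linarith
    nlinarith
  have hlogcinv : Summable fun m : Λ => Complex.log ((c (m : ℕ))⁻¹) := by
    apply Summable.congr hlogc.neg
    intro m
    rw [Complex.log_inv _ (hcarg m)]
  have hmul_cinv : Multipliable fun m : Λ => (c (m : ℕ))⁻¹ :=
    Complex.multipliable_of_summable_log hlogcinv
  -- summability of real logs
  have hlogr_le : ∀ m : Λ, 0 ≤ Real.log ((r (m : ℕ))⁻¹) ∧
      Real.log ((r (m : ℕ))⁻¹) ≤ (1 - E)⁻¹ * z (m : ℕ) := by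
    intro m
    have hrm := hr_pos m
    have hz1' := hz1 m
    have hzm := hzpos (m : ℕ)
    have hzE' := hzE m
    constructor
    · rw [Real.log_inv]
      have : Real.log (r (m : ℕ)) ≤ 0 := Real.log_nonpos (by linarith) (by simp [hrdef]; linarith)
      linarith
    · have h1 : Real.log ((r (m : ℕ))⁻¹) ≤ (r (m : ℕ))⁻¹ - 1 :=
        Real.log_le_sub_one_of_pos (inv_pos.mpr hrm)
      have h2 : (r (m : ℕ))⁻¹ - 1 = z (m : ℕ) / r (m : ℕ) := by
        rw [eq_div_iff (ne_of_gt hrm), sub_mul, inv_mul_cancel₀ (ne_of_gt hrm)]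
        simp only [hrdef]; ring
      have h3 : z (m : ℕ) / r (m : ℕ) ≤ (1 - E)⁻¹ * z (m : ℕ) := by
        rw [div_eq_mul_inv, mul_comm]
        apply mul_le_mul_of_nonneg_right _ (le_of_lt hzm)
        apply inv_anti₀ (by linarith)
        simp only [hrdef]; linarith
      linarith
  have hlogrinv : Summable fun m : Λ => Real.log ((r (m : ℕ))⁻¹) := by
    apply Summable.of_nonneg_of_le (fun m => (hlogr_le m).1) (fun m => (hlogr_le m).2)
      (hzsum.mul_left _)
  have hmul_rinv : Multipliable fun m : Λ => (r (m : ℕ))⁻¹ :=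
    Real.multipliable_of_summable_log (fun m => inv_pos.mpr (hr_pos m)) hlogrinv
  have hmul_r : Multipliable fun m : Λ => r (m : ℕ) :=
    Real.multipliable_of_summable_log (fun m => hr_pos m)
      (by
        apply Summable.congr hlogrinv.neg
        intro m
        rw [Real.log_inv]; ring)
  -- multipliability of B
  have hmul_absinv : Multipliable fun m : Λ => (‖c (m : ℕ)‖)⁻¹ := by
    have := hmul_cinv.norm
    apply this.congr
    intro m
    rw [norm_inv]
  have hmul_B : Multipliable fun m : Λ => B (m : ℕ) := by
    apply (hmul_absinv.mul hmul_r).congr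
    intro m
    rw [hBr m, mul_assoc, inv_mul_cancel₀ (ne_of_gt (hr_pos m)), mul_one]
  -- the basic product identities
  have hFr_eq : Fr σ = ∏' m : Λ, (r (m : ℕ))⁻¹ := by
    rw [hFr]
  have habsF : ‖F ((σ : ℂ) + t * Complex.I)‖ =
      (∏' m : Λ, B (m : ℕ)) * Fr σ := by
    rw [hF, ← hs]
    have h1 : ‖∏' m : Λ, (1 - Complex.exp (-s * (m : ℕ)))⁻¹‖ =
        ∏' m : Λ, (‖c (m : ℕ)‖)⁻¹ := by
      rw [hmul_cinv.norm_tprod]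
      apply tprod_congr
      intro m
      rw [norm_inv]
    rw [h1]
    have h2 : ∏' m : Λ, (‖c (m : ℕ)‖)⁻¹ =
        ∏' m : Λ, B (m : ℕ) * (r (m : ℕ))⁻¹ := tprod_congr fun m => hBr m
    rw [h2, hmul_B.tprod_mul hmul_rinv, hFr_eq]
  -- positivity of Fr σ
  have hFrpos : 0 < Fr σ := by
    rw [hFr_eq]
    have := Real.rexp_tsum_eq_tprod (f := fun m : Λ => (r (m : ℕ))⁻¹)
      (fun m => inv_pos.mpr (hr_pos m)) hlogrinv
    rw [← this]
    exact Real.exp_pos _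
  -- tprod of B expressed as exp of tsum of logs
  have hlogB : Summable fun m : Λ => Real.log (B (m : ℕ)) := by
    have h1 : ∀ m : Λ, Real.log (B (m : ℕ)) =
        (Complex.log ((c (m : ℕ))⁻¹)).re + Real.log (r (m : ℕ)) := by
      intro m
      have habsne : ‖c (m : ℕ)‖ ≠ 0 := norm_ne_zero_iff.mpr (hc0 m)
      have hBeq : B (m : ℕ) = (‖c (m : ℕ)‖)⁻¹ * r (m : ℕ) := by
        rw [hBr m, mul_assoc, inv_mul_cancel₀ (ne_of_gt (hr_pos m)), mul_one]
      rw [hBeq, Real.log_mul (inv_ne_zero habsne) (ne_of_gt (hr_pos m))]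
      congr 1
      rw [Complex.log_re, norm_inv]
    apply Summable.congr _ (fun m => (h1 m).symm)
    apply Summable.add
    · exact (Complex.hasSum_re hlogcinv.hasSum).summable
    · apply Summable.congr hlogrinv.neg
      intro m
      rw [Real.log_inv]; ring
  have htprodB : ∏' m : Λ, B (m : ℕ) = Real.exp (∑' m : Λ, Real.log (B (m : ℕ))) := by
    have := Real.rexp_tsum_eq_tprod (f := fun m : Λ => B (m : ℕ))
      (fun m => hB_pos m) hlogB
    rw [← this]
  have hlogB_nonpos : ∀ m : Λ, Real.log (B (m : ℕ)) ≤ 0 := fun m =>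
    Real.log_nonpos (le_of_lt (hB_pos _)) (hB_le_one _)
  -- the main bound
  have main : ∀ S : Finset ℕ, (S : Set ℕ) ⊆ Λ →
      ‖F ((σ : ℂ) + t * Complex.I)‖ / Fr σ ≤ ∏ m ∈ S, B m := by
    intro S hS
    have hdiv : ‖F ((σ : ℂ) + t * Complex.I)‖ / Fr σ = ∏' m : Λ, B (m : ℕ) := by
      rw [habsF, mul_div_assoc, div_self (ne_of_gt hFrpos), mul_one]
    rw [hdiv]
    -- finset of the subtype
    set T : Finset Λ := S.attach.map ⟨fun x => ⟨x.1, hS x.2⟩,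
      fun a b hab => by
        apply Subtype.ext
        have := congrArg Subtype.val hab
        simpa using this⟩ with hT
    have hsum_split := Summable.sum_add_tsum_compl (s := T) hlogB
    have hcompl_nonpos : ∑' (x : ↑((T : Set Λ))ᶜ), Real.log (B ((x : Λ) : ℕ)) ≤ 0 :=
      tsum_nonpos fun x => hlogB_nonpos _
    have hle : ∑' m : Λ, Real.log (B (m : ℕ)) ≤ ∑ m ∈ T, Real.log (B (m : ℕ)) := by
      rw [← hsum_split]
      linarith
    rw [htprodB]
    calc Real.exp (∑' m : Λ, Real.log (B (m : ℕ)))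
        ≤ Real.exp (∑ m ∈ T, Real.log (B (m : ℕ))) := Real.exp_le_exp.mpr hle
      _ = ∏ m ∈ T, B (m : ℕ) := by
          rw [Real.exp_sum]
          exact Finset.prod_congr rfl fun m _ => Real.exp_log (hB_pos _)
      _ = ∏ m ∈ S, B m := by
          rw [hT, Finset.prod_map]
          exact Finset.prod_attach S (fun m => B m)
  constructor
  · intro S hS
    exact main S hS
  · have h := main ∅ (by simp)
    simp only [Finset.prod_empty] at h
    rw [div_le_one hFrpos] at h
    exact h
end

section
/- Let F(s) = ∏_{m∈Λ}(1-e^{-sm})^{-1} for Λ ⊆ ℕ* and ρ > 0. Suppose S ⊆ Λ is a finite set of integers m ≤ 1/ρ such that ‖mt/2π‖ ≥ 1/(3q) for all m ∈ S (for some fixed q ≥ 1 and some t ∈ ℝ). Then |F(ρ + it)|/F(ρ) ≤ (1 + 5/(9 q² (max S)² ρ²))^{-|S|/2}. -/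
open Real



/-- The distance from a real number to the nearest integer. -/
noncomputable def intDist (θ : ℝ) : ℝ := |θ - round θ|

section aux

lemma euler_lemA {x : ℝ} (hx0 : 0 < x) (hx1 : x ≤ 1) :
    Real.exp x * (1 - Real.exp (-x)) ^ 2 ≤ 16 / 5 * x ^ 2 := by
  set a := Real.exp (x/2) with ha
  set b := Real.exp (-(x/2)) with hb
  have hxa : Real.exp x = a * a := by rw [ha, ← Real.exp_add]; ring_nf
  have hxb : Real.exp (-x) = b * b := by rw [hb, ← Real.exp_add]; ring_nf
  have hab : a * b = 1 := by rw [ha, hb, ← Real.exp_add]; ring_nf; exact Real.exp_zero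
  have key : Real.exp x * (1 - Real.exp (-x)) ^ 2 = (a - b) ^ 2 := by
    rw [hxa, hxb]; linear_combination (b^2*(a*b+1) - 2*(a*b)) * hab
  rw [key]
  set u := x / 2 with hu
  have hu0 : 0 < u := by positivity
  have hu1 : u ≤ 1/2 := by rw [hu]; linarith
  have hup : a ≤ 1 + u + 3/4 * u ^ 2 := by
    have hb := Real.exp_bound (x := u) (by rw [abs_of_pos hu0]; linarith) (n := 2) (by norm_num)
    have hs : ∑ i ∈ Finset.range 2, u ^ i / (Nat.factorial i) = 1 + u := by
      simp [Finset.sum_range_succ, Nat.factorial]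
    rw [hs, abs_of_pos hu0] at hb
    have := abs_le.mp hb
    norm_num at this ⊢
    nlinarith [this.2]
  have hlo : 1 - u ≤ b := by
    have := Real.add_one_le_exp (-u); rw [hb] at *; linarith
  have hpos : 0 ≤ a - b := by
    have := Real.exp_le_exp.mpr (show -u ≤ u by linarith); rw [ha, hb]; linarith
  have hdiff : a - b ≤ 19/8 * u := by nlinarith
  nlinarith


lemma euler_lemB (θ : ℝ) : 2 * intDist θ ≤ |Real.sin (π * θ)| := by
  set n : ℤ := round θ with hn
  set ε : ℝ := θ - n with hε
  have hεabs : |ε| ≤ 1/2 := by rw [hε, hn]; exact abs_sub_round θ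
  have h1 : Real.sin (π * θ) = (-1 : ℝ) ^ n * Real.sin (π * ε) := by
    rw [show π * θ = π * ε + n * π by rw [hε]; ring, Real.sin_add_int_mul_pi]
  have h2 : |Real.sin (π * θ)| = |Real.sin (π * ε)| := by
    rw [h1, abs_mul]
    rcases Int.even_or_odd n with he | ho
    · rw [he.neg_one_zpow]; simp
    · rw [Odd.neg_one_zpow ho]; simp
  rw [h2, intDist, ← hn, ← hε]
  have h3 : |Real.sin (π * ε)| = Real.sin (π * |ε|) := by
    rcases abs_cases ε with ⟨h, _⟩ | ⟨h, hneg⟩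
    · rw [h, abs_of_nonneg]
      exact Real.sin_nonneg_of_nonneg_of_le_pi (by positivity)
        (by nlinarith [Real.pi_pos, h ▸ hεabs])
    · rw [h, show π * -ε = -(π * ε) by ring, Real.sin_neg, abs_of_nonpos]
      have h4 : 0 ≤ Real.sin (π * -ε) :=
        Real.sin_nonneg_of_nonneg_of_le_pi (by nlinarith [Real.pi_pos])
          (by nlinarith [Real.pi_pos, h ▸ hεabs])
      rw [show π * -ε = -(π * ε) by ring, Real.sin_neg] at h4
      linarith
  rw [h3]
  have := Real.mul_le_sin (x := π * |ε|) (by positivity)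
    (by nlinarith [Real.pi_pos, hεabs])
  calc 2 * |ε| = 2 / π * (π * |ε|) := by field_simp
    _ ≤ Real.sin (π * |ε|) := this


lemma euler_lemC (a b : ℝ) : ‖1 - Complex.exp (-(a:ℂ) - b * Complex.I)‖ ^ 2
    = (1 - Real.exp (-a)) ^ 2 + 4 * Real.exp (-a) * Real.sin (b / 2) ^ 2 := by
  rw [← Complex.normSq_eq_norm_sq]
  have hre : (-(a:ℂ) - b * Complex.I).re = -a := by simp
  have him : (-(a:ℂ) - b * Complex.I).im = -b := by simp
  rw [Complex.normSq_apply, Complex.sub_re, Complex.sub_im, Complex.one_re, Complex.one_im,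
    Complex.exp_re, Complex.exp_im, hre, him]
  have h1 : Real.sin b ^ 2 + Real.cos b ^ 2 = 1 := Real.sin_sq_add_cos_sq b
  have h2 : Real.sin (b/2) ^ 2 = (1 - Real.cos b)/2 := by
    rw [Real.sin_sq_eq_half_sub, show 2*(b/2) = b by ring]; ring
  rw [Real.cos_neg, Real.sin_neg]
  nlinarith [Real.exp_pos (-a), sq_nonneg (Real.sin b), sq_nonneg (Real.cos b)]


lemma euler_sumExp (Λ : Set ℕ) (ρ : ℝ) (hρ : 0 < ρ) :
    Summable (fun m : Λ => Real.exp (-ρ * m)) := by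
  have h : Summable (fun n : ℕ => Real.exp (-ρ * n)) := by
    have he : (fun n : ℕ => Real.exp (-ρ * n)) = fun n => Real.exp (-ρ) ^ n := by
      funext n; rw [← Real.exp_nat_mul]; ring_nf
    rw [he]
    exact summable_geometric_of_lt_one (Real.exp_nonneg _)
      (Real.exp_lt_one_iff.mpr (by linarith))
  exact h.subtype _


lemma euler_normE {s : ℂ} {ρ : ℝ} (hs : s.re = ρ) (m : ℕ) :
    ‖Complex.exp (-s * (m : ℕ))‖ = Real.exp (-ρ * m) := by
  rw [Complex.norm_exp]
  congr 1
  simp [Complex.mul_re, hs]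


lemma euler_multA (Λ : Set ℕ) (hΛ : ∀ m ∈ Λ, 0 < m) (ρ : ℝ) (hρ : 0 < ρ) (s : ℂ) (hs : s.re = ρ) :
    Multipliable (fun m : Λ => (1 - Complex.exp (-s * (m : ℕ)))⁻¹) := by
  have hEnorm : ∀ m : Λ, ‖Complex.exp (-s * (m : ℕ))‖ = Real.exp (-ρ * m) :=
    fun m => euler_normE hs m
  have hlt : ∀ m : Λ, ‖Complex.exp (-s * (m : ℕ))‖ ≤ Real.exp (-ρ) := by
    intro m
    rw [hEnorm m]
    apply Real.exp_le_exp.mpr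
    have h1 : (1 : ℝ) ≤ (m : ℕ) := by exact_mod_cast hΛ m m.2
    nlinarith
  have hltone : Real.exp (-ρ) < 1 := Real.exp_lt_one_iff.mpr (by linarith)
  have hne : ∀ m : Λ, (1 - Complex.exp (-s * (m : ℕ)))⁻¹ ≠ 0 := by
    intro m
    apply inv_ne_zero
    intro h
    have : ‖Complex.exp (-s * (m : ℕ))‖ = 1 := by
      have := sub_eq_zero.mp h; rw [← this]; simp
    linarith [hlt m, this]
  apply Complex.multipliable_of_summable_log
  set C : ℝ := (1 - Real.exp (-ρ))⁻¹ / 2 + 1 with hC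
  apply Summable.of_norm_bounded (g := fun m : Λ => C * Real.exp (-ρ * m))
    (((euler_sumExp Λ ρ hρ)).mul_left C)
  intro m
  set z := Complex.exp (-s * (m : ℕ)) with hz
  have hzn : ‖z‖ = Real.exp (-ρ * m) := hEnorm m
  have hzle : ‖z‖ ≤ Real.exp (-ρ) := hlt m
  have hz1 : ‖z‖ < 1 := lt_of_le_of_lt hzle hltone
  have hlog := Complex.norm_log_one_sub_inv_sub_self_le hz1
  have htri : ‖Complex.log (1 - z)⁻¹‖ ≤ ‖z‖ ^ 2 * (1 - ‖z‖)⁻¹ / 2 + ‖z‖ := by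
    calc ‖Complex.log (1 - z)⁻¹‖ ≤ ‖Complex.log (1 - z)⁻¹ - z‖ + ‖z‖ := by
          simpa using norm_add_le (Complex.log (1 - z)⁻¹ - z) z
      _ ≤ ‖z‖ ^ 2 * (1 - ‖z‖)⁻¹ / 2 + ‖z‖ := by linarith
  have hinv : (1 - ‖z‖)⁻¹ ≤ (1 - Real.exp (-ρ))⁻¹ := by
    apply inv_anti₀ (by linarith) (by linarith)
  have hz0 : 0 ≤ ‖z‖ := norm_nonneg _
  calc ‖Complex.log (1 - z)⁻¹‖ ≤ ‖z‖ ^ 2 * (1 - ‖z‖)⁻¹ / 2 + ‖z‖ := htri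
    _ ≤ C * ‖z‖ := by
        rw [hC]
        have h2 : ‖z‖ ^ 2 ≤ ‖z‖ := by nlinarith
        have h3 : (0:ℝ) < (1 - Real.exp (-ρ))⁻¹ := by
          apply inv_pos.mpr; linarith
        have h4 : (0:ℝ) ≤ (1 - ‖z‖)⁻¹ := by
          apply inv_nonneg.mpr; linarith
        nlinarith
    _ = C * Real.exp (-ρ * m) := by rw [hzn]


lemma euler_multB (Λ : Set ℕ) (hΛ : ∀ m ∈ Λ, 0 < m) (ρ : ℝ) (hρ : 0 < ρ) :
    Multipliable (fun m : Λ => (1 - Real.exp (-ρ * (m : ℕ)))⁻¹) := by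
  have hlt : ∀ m : Λ, Real.exp (-ρ * m) ≤ Real.exp (-ρ) := by
    intro m
    apply Real.exp_le_exp.mpr
    have h1 : (1 : ℝ) ≤ (m : ℕ) := by exact_mod_cast hΛ m m.2
    nlinarith
  have hltone : Real.exp (-ρ) < 1 := Real.exp_lt_one_iff.mpr (by linarith)
  have hpos : ∀ m : Λ, 0 < (1 - Real.exp (-ρ * (m : ℕ)))⁻¹ := by
    intro m
    apply inv_pos.mpr
    linarith [hlt m]
  apply Real.multipliable_of_summable_log hpos
  show Summable fun m : Λ => Real.log (1 - Real.exp (-ρ * (m : ℕ)))⁻¹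
  set C : ℝ := (1 - Real.exp (-ρ))⁻¹ with hC
  apply Summable.of_nonneg_of_le ?_ ?_ (((euler_sumExp Λ ρ hρ)).mul_left C)
  · intro m
    apply Real.log_nonneg
    have he0 : 0 < Real.exp (-ρ * (m:ℕ)) := Real.exp_pos _
    have hb0 : 0 < 1 - Real.exp (-ρ * (m:ℕ)) := by linarith [hlt m]
    exact (one_le_inv₀ hb0).mpr (by linarith)
  · intro m
    set e := Real.exp (-ρ * (m : ℕ)) with he
    have he0 : 0 < e := Real.exp_pos _
    have he1 : e ≤ Real.exp (-ρ) := hlt m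
    have hb0 : 0 < 1 - e := by linarith
    have hlog := Real.log_le_sub_one_of_pos (inv_pos.mpr hb0)
    calc Real.log (1 - e)⁻¹ ≤ (1 - e)⁻¹ - 1 := hlog
      _ = e / (1 - e) := by field_simp; ring
      _ ≤ C * e := by
          rw [hC, div_eq_mul_inv, mul_comm]
          apply mul_le_mul_of_nonneg_right _ he0.le
          exact inv_anti₀ (by linarith) (by linarith)


end aux

lemma euler_A16 {x em ex : ℝ} (h : ex * (1 - em) ^ 2 ≤ 16/5 * x^2) (hprod : ex * em = 1)
    (hem : 0 < em) : (1 - em)^2 ≤ 16/5 * x^2 * em := by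
  nlinarith [mul_le_mul_of_nonneg_right h hem.le]

lemma euler_strong_core {q Mr ρ x em sn : ℝ} (hq0 : 0 < q) (hM0 : 0 < Mr) (hρ : 0 < ρ)
    (hem : 0 < em) (hx0 : 0 ≤ x) (hxM : x ≤ ρ * Mr)
    (hA16 : (1 - em)^2 ≤ 16/5 * x^2 * em)
    (hsin : 4 / (9*q^2) ≤ sn) :
    (5 / (9 * q^2 * Mr^2 * ρ^2)) * (1 - em)^2 ≤ 4 * em * sn := by
  set c : ℝ := 5 / (9 * q^2 * Mr^2 * ρ^2) with hc
  have hc0 : 0 < c := by rw [hc]; positivity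
  have h1 : c * (1 - em)^2 ≤ c * (16/5 * x^2 * em) := mul_le_mul_of_nonneg_left hA16 hc0.le
  have h2 : c * (16/5 * x^2 * em) ≤ c * (16/5 * (ρ*Mr)^2 * em) := by
    have : x^2 ≤ (ρ*Mr)^2 := by nlinarith
    have := mul_le_mul_of_nonneg_right (mul_le_mul_of_nonneg_left this (by norm_num : (0:ℝ) ≤ 16/5)) hem.le
    exact mul_le_mul_of_nonneg_left this hc0.le
  have h3 : c * (16/5 * (ρ*Mr)^2 * em) = 16 / (9*q^2) * em := by
    rw [hc]; field_simp
  have h4 : 16 / (9*q^2) * em = 4 * em * (4 / (9*q^2)) := by ring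
  have h5 : 4 * em * (4 / (9*q^2)) ≤ 4 * em * sn :=
    mul_le_mul_of_nonneg_left hsin (by positivity)
  linarith


/-- nnnorm as a MonoidHom on a normed field -/
noncomputable def nnnormHom' (𝕜 : Type*) [NormedField 𝕜] : 𝕜 →* NNReal where
  toFun := fun z => ‖z‖₊
  map_one' := nnnorm_one
  map_mul' := fun x y => nnnorm_mul x y

theorem euler_product_saddle_bound (Λ : Set ℕ) (hΛ : ∀ m ∈ Λ, 0 < m)
    (ρ : ℝ) (hρ : 0 < ρ) (t : ℝ) (q : ℕ) (hq : 1 ≤ q)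
    (S : Finset ℕ) (hSne : S.Nonempty) (hSΛ : (S : Set ℕ) ⊆ Λ)
    (hSsmall : ∀ m ∈ S, (m : ℝ) ≤ 1 / ρ)
    (hSdist : ∀ m ∈ S, 1 / (3 * (q : ℝ)) ≤ intDist ((m : ℝ) * t / (2 * Real.pi)))
    (F : ℂ → ℂ) (hF : ∀ s : ℂ, F s = ∏' m : Λ, (1 - Complex.exp (-s * (m : ℕ)))⁻¹)
    (Fr : ℝ → ℝ) (hFr : ∀ x : ℝ, Fr x = ∏' m : Λ, (1 - Real.exp (-x * (m : ℕ)))⁻¹) :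
    ‖F (ρ + t * Complex.I)‖ / Fr ρ ≤
      (1 + 5 / (9 * (q : ℝ) ^ 2 * (S.max' hSne : ℝ) ^ 2 * ρ ^ 2)) ^ (-(S.card : ℝ) / 2) := by
  classical
  set s : ℂ := (ρ : ℂ) + t * Complex.I with hsdef
  have hsre : s.re = ρ := by simp [hsdef]
  set M : ℕ := S.max' hSne with hM
  have hMS : M ∈ S := S.max'_mem hSne
  have hM1 : 1 ≤ M := hΛ M (hSΛ hMS)
  have hq0 : (0:ℝ) < q := by exact_mod_cast Nat.lt_of_lt_of_le Nat.zero_lt_one hq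
  have hM0 : (0:ℝ) < M := by exact_mod_cast hM1
  set c : ℝ := 5 / (9 * (q : ℝ) ^ 2 * (M : ℝ) ^ 2 * ρ ^ 2) with hc
  have hc0 : 0 < c := by positivity
  have h1c : (0:ℝ) ≤ 1 + c := by linarith
  set Kr : ℝ := (Real.sqrt (1 + c))⁻¹ with hKr
  have hKr0 : 0 < Kr := by
    rw [hKr]; exact inv_pos.mpr (Real.sqrt_pos.mpr (by linarith))
  -- the functions
  set A : Λ → ℂ := fun m => (1 - Complex.exp (-s * (m : ℕ)))⁻¹ with hAdef
  set Br : Λ → ℝ := fun m => (1 - Real.exp (-ρ * (m : ℕ)))⁻¹ with hBrdef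
  have hAmult : Multipliable A := euler_multA Λ hΛ ρ hρ s hsre
  have hBrmult : Multipliable Br := euler_multB Λ hΛ ρ hρ
  -- basic facts per m
  have hm1 : ∀ m : Λ, (1:ℝ) ≤ (m : ℕ) := fun m => by exact_mod_cast hΛ m m.2
  have hem_lt : ∀ m : Λ, Real.exp (-ρ * (m : ℕ)) < 1 := by
    intro m
    apply Real.exp_lt_one_iff.mpr
    nlinarith [hm1 m]
  have hem_pos : ∀ m : Λ, 0 < Real.exp (-ρ * (m : ℕ)) := fun m => Real.exp_pos _
  have hBr_pos : ∀ m : Λ, 0 < Br m := by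
    intro m; rw [hBrdef]
    exact inv_pos.mpr (by linarith [hem_lt m])
  have hBr1 : ∀ m : Λ, 1 ≤ Br m := by
    intro m; rw [hBrdef]
    exact (one_le_inv₀ (by linarith [hem_lt m])).mpr (by linarith [hem_pos m])
  have hAne : ∀ m : Λ, (0:ℝ) < 1 - Real.exp (-ρ * (m:ℕ)) := fun m => by linarith [hem_lt m]
  -- norm of the complex factor is at least 1 - e_m
  have hlow : ∀ m : Λ, 1 - Real.exp (-ρ * (m:ℕ)) ≤ ‖1 - Complex.exp (-s * (m:ℕ))‖ := by
    intro m
    have h1 := norm_sub_norm_le (1 : ℂ) (Complex.exp (-s * (m:ℕ)))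
    rw [norm_one, euler_normE hsre] at h1
    exact h1
  -- weak bound
  have hweak : ∀ m : Λ, ‖A m‖ ≤ Br m := by
    intro m
    rw [hAdef, hBrdef]
    simp only [norm_inv]
    exact inv_anti₀ (hAne m) (hlow m)
  -- strong bound on S
  have hstrong : ∀ m : Λ, (m : ℕ) ∈ S → ‖A m‖ ≤ Kr * Br m := by
    intro m hmS
    have hx0 : 0 < ρ * (m:ℕ) := by nlinarith [hm1 m]
    have hx1 : ρ * (m:ℕ) ≤ 1 := by
      have := hSsmall (m:ℕ) hmS
      rw [le_div_iff₀ hρ] at this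
      linarith
    have hxM : ρ * (m:ℕ) ≤ ρ * (M:ℕ) := by
      have : ((m:ℕ):ℝ) ≤ (M:ℝ) := by exact_mod_cast S.le_max' _ hmS
      nlinarith
    -- the squared norm
    have hform : (-s * ((m:ℕ):ℂ)) = -((ρ*(m:ℕ) : ℝ):ℂ) - ((t*(m:ℕ) : ℝ):ℂ) * Complex.I := by
      rw [hsdef]; push_cast; ring
    have h2 : ‖1 - Complex.exp (-s * (m:ℕ))‖ ^ 2
        = (1 - Real.exp (-(ρ*(m:ℕ)))) ^ 2
          + 4 * Real.exp (-(ρ*(m:ℕ))) * Real.sin (t*(m:ℕ)/2) ^ 2 := by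
      rw [hform]; exact euler_lemC (ρ*(m:ℕ)) (t*(m:ℕ))
    have hnegrw : -(ρ*((m:ℕ):ℝ)) = -ρ * (m:ℕ) := by ring
    rw [hnegrw] at h2
    -- the sine bound
    have hsin : 2 / (3 * (q:ℝ)) ≤ |Real.sin (t*(m:ℕ)/2)| := by
      have hB := euler_lemB (((m:ℕ):ℝ) * t / (2 * π))
      have hπ : π * (((m:ℕ):ℝ) * t / (2 * π)) = t*(m:ℕ)/2 := by
        field_simp [Real.pi_ne_zero]
      rw [hπ] at hB
      have hd := hSdist (m:ℕ) hmS
      calc 2 / (3*(q:ℝ)) = 2 * (1 / (3*(q:ℝ))) := by ring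
        _ ≤ 2 * intDist (((m:ℕ):ℝ) * t / (2 * π)) := by linarith
        _ ≤ |Real.sin (t*(m:ℕ)/2)| := hB
    have hsinsq : 4 / (9 * (q:ℝ)^2) ≤ Real.sin (t*(m:ℕ)/2) ^ 2 := by
      have h3 : (2 / (3 * (q:ℝ)))^2 ≤ |Real.sin (t*(m:ℕ)/2)|^2 := by
        apply pow_le_pow_left₀ (by positivity) hsin
      rw [sq_abs] at h3
      calc 4 / (9 * (q:ℝ)^2) = (2 / (3 * (q:ℝ)))^2 := by field_simp; ring
        _ ≤ _ := h3
    -- lemA bound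
    have hA16 : (1 - Real.exp (-ρ * (m:ℕ)))^2
        ≤ 16/5 * (ρ*(m:ℕ))^2 * Real.exp (-ρ * (m:ℕ)) := by
      have hlA := euler_lemA hx0 hx1
      rw [hnegrw] at hlA
      have hprod : Real.exp (ρ*(m:ℕ)) * Real.exp (-ρ * (m:ℕ)) = 1 := by
        rw [← Real.exp_add]; ring_nf; exact Real.exp_zero
      exact euler_A16 hlA hprod (hem_pos m)
    -- core inequality
    have hcore : (1 + c) * (1 - Real.exp (-ρ * (m:ℕ)))^2
        ≤ ‖1 - Complex.exp (-s * (m:ℕ))‖ ^ 2 := by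
      rw [h2]
      have hkey : c * (1 - Real.exp (-ρ * (m:ℕ)))^2
          ≤ 4 * Real.exp (-ρ * (m:ℕ)) * Real.sin (t*(m:ℕ)/2) ^ 2 := by
        rw [hc]
        exact euler_strong_core hq0 hM0 hρ (hem_pos m) (by positivity) hxM hA16 hsinsq
      calc (1 + c) * (1 - Real.exp (-ρ * (m:ℕ)))^2
          = (1 - Real.exp (-ρ * (m:ℕ)))^2 + c * (1 - Real.exp (-ρ * (m:ℕ)))^2 := by ring
        _ ≤ _ := by linarith [hkey]
    -- from the squared inequality to the bound
    have hsq : Real.sqrt (1+c) * (1 - Real.exp (-ρ * (m:ℕ)))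
        ≤ ‖1 - Complex.exp (-s * (m:ℕ))‖ := by
      have hl : 0 ≤ Real.sqrt (1+c) * (1 - Real.exp (-ρ * (m:ℕ))) := by
        have := hAne m; positivity
      have hr : 0 ≤ ‖1 - Complex.exp (-s * (m:ℕ))‖ := norm_nonneg _
      have hsq2 : (Real.sqrt (1+c) * (1 - Real.exp (-ρ * (m:ℕ))))^2
          ≤ ‖1 - Complex.exp (-s * (m:ℕ))‖ ^ 2 := by
        rw [mul_pow, Real.sq_sqrt h1c]
        exact hcore
      rw [← Real.sqrt_sq hl, ← Real.sqrt_sq hr]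
      exact Real.sqrt_le_sqrt hsq2
    show ‖(1 - Complex.exp (-s * ((m:ℕ))))⁻¹‖ ≤ Kr * (1 - Real.exp (-ρ * (m:ℕ)))⁻¹
    rw [norm_inv, hKr, ← mul_inv]
    refine inv_anti₀ ?_ hsq
    have h1 := hAne m
    have h2 : 0 < Real.sqrt (1 + c) := Real.sqrt_pos.mpr (by linarith)
    positivity
  -- NNReal setup
  set nA : Λ → NNReal := fun m => ‖A m‖₊ with hnA
  set nB : Λ → NNReal := fun m => ‖Br m‖₊ with hnB
  have hnAmult : Multipliable nA := hAmult.map (nnnormHom' ℂ) continuous_nnnorm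
  have hnBmult : Multipliable nB := hBrmult.map (nnnormHom' ℝ) continuous_nnnorm
  have habsF : ‖F s‖₊ = ∏' m : Λ, nA m := by
    rw [hF s]
    exact hAmult.map_tprod (nnnormHom' ℂ) continuous_nnnorm
  have hFrtp : Fr ρ = ∏' m : Λ, Br m := hFr ρ
  have hFr1 : 1 ≤ Fr ρ := by
    rw [hFrtp]
    refine ge_of_tendsto' hBrmult.hasProd (fun sf => ?_)
    calc (1:ℝ) = ∏ _i ∈ sf, 1 := by rw [Finset.prod_const_one]
      _ ≤ ∏ i ∈ sf, Br i := Finset.prod_le_prod (fun _ _ => zero_le_one) (fun i _ => hBr1 i)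
  have hFrpos : 0 < Fr ρ := lt_of_lt_of_le one_pos hFr1
  have hnFr : (‖Fr ρ‖₊ : NNReal) = ∏' m : Λ, nB m := by
    rw [hFrtp]
    exact hBrmult.map_tprod (nnnormHom' ℝ) continuous_nnnorm
  -- finset of indices in Λ corresponding to S
  set emb : {x // x ∈ S} ↪ ↑Λ :=
    ⟨fun x => ⟨(x : ℕ), hSΛ x.2⟩, by
      intro a b hab
      exact Subtype.ext (by simpa using congrArg Subtype.val hab)⟩ with hemb
  set S' : Finset ↑Λ := S.attach.map emb with hS'
  have hS'card : S'.card = S.card := by rw [hS', Finset.card_map, Finset.card_attach]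
  have hS'mem : ∀ x : ↑Λ, x ∈ S' ↔ (x : ℕ) ∈ S := by
    intro x
    rw [hS', Finset.mem_map]
    constructor
    · rintro ⟨a, -, rfl⟩; exact a.2
    · intro hx; exact ⟨⟨(x:ℕ), hx⟩, Finset.mem_attach _ _, Subtype.ext rfl⟩
  set K' : NNReal := Kr.toNNReal with hK'
  have hK'coe : (K' : ℝ) = Kr := Real.coe_toNNReal _ hKr0.le
  -- nnreal pointwise bounds
  have hnn_weak : ∀ m : Λ, nA m ≤ nB m := by
    intro m
    rw [← NNReal.coe_le_coe, hnA, hnB]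
    simp only [coe_nnnorm, Real.norm_eq_abs]
    rw [abs_of_nonneg (hBr_pos m).le]
    exact hweak m
  have hnn_strong : ∀ m : Λ, (m:ℕ) ∈ S → nA m ≤ K' * nB m := by
    intro m hm
    rw [← NNReal.coe_le_coe, hnA, hnB, NNReal.coe_mul, hK'coe]
    simp only [coe_nnnorm, Real.norm_eq_abs]
    rw [abs_of_nonneg (hBr_pos m).le]
    exact hstrong m hm
  -- indicator-type function
  set hfun : Λ → NNReal := fun m => if (m:ℕ) ∈ S then K' else 1 with hhfun
  have hh : HasProd hfun (K' ^ S.card) := by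
    have hne : ∀ x : Λ, x ∉ S' → hfun x = 1 := by
      intro x hx
      simp only [hhfun]
      simp only [if_neg (fun h => hx ((hS'mem x).mpr h))]
    have := hasProd_prod_of_ne_finset_one (s := S') (f := hfun) (L := SummationFilter.unconditional _) hne
    have heq : ∏ x ∈ S', hfun x = K' ^ S.card := by
      rw [← hS'card, ← Finset.prod_const]
      apply Finset.prod_congr rfl
      intro x hx
      simp only [hhfun]
      exact if_pos ((hS'mem x).mp hx)
    rwa [heq] at this
  have hgmult : Multipliable (fun m : Λ => hfun m * nB m) := hh.multipliable.mul hnBmult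
  have hmain : ∏' m : Λ, nA m ≤ K' ^ S.card * ∏' m : Λ, nB m := by
    calc ∏' m : Λ, nA m ≤ ∏' m : Λ, (hfun m * nB m) := by
          apply Multipliable.tprod_le_tprod _ hnAmult hgmult
          intro i
          simp only [hhfun]
          by_cases hi : (i:ℕ) ∈ S
          · rw [if_pos hi]; exact hnn_strong i hi
          · rw [if_neg hi, one_mul]; exact hnn_weak i
      _ = (∏' m : Λ, hfun m) * ∏' m : Λ, nB m := Multipliable.tprod_mul hh.multipliable hnBmult
      _ = K' ^ S.card * ∏' m : Λ, nB m := by rw [hh.tprod_eq]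
  -- back to the reals
  have hfinal : ‖F s‖ ≤ Kr ^ S.card * Fr ρ := by
    have h1 : (‖F s‖₊ : ℝ) ≤ ((K' ^ S.card * ∏' m : Λ, nB m : NNReal) : ℝ) := by
      rw [habsF]; exact_mod_cast hmain
    rw [NNReal.coe_mul, NNReal.coe_pow, hK'coe, ← hnFr] at h1
    have h2 : (‖F s‖₊ : ℝ) = ‖F s‖ := by
      rw [coe_nnnorm]
    have h3 : ((‖Fr ρ‖₊ : NNReal) : ℝ) = Fr ρ := by
      rw [coe_nnnorm, Real.norm_eq_abs, abs_of_nonneg hFrpos.le]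
    rwa [h2, h3] at h1
  -- rewrite the right-hand side
  have hRHS : (1 + c) ^ (-(S.card : ℝ)/2) = Kr ^ S.card := by
    have h1 : Kr = (1 + c) ^ (-(1/2) : ℝ) := by
      rw [hKr, Real.rpow_neg h1c, Real.sqrt_eq_rpow]
    rw [h1, ← Real.rpow_natCast ((1 + c) ^ (-(1/2) : ℝ)) S.card, ← Real.rpow_mul h1c]
    congr 1
    ring
  rw [div_le_iff₀ hFrpos]
  calc ‖F s‖ ≤ Kr ^ S.card * Fr ρ := hfinal
    _ = (1 + c) ^ (-(S.card : ℝ)/2) * Fr ρ := by rw [hRHS]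
end
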